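/- arXiv:2506.16045 — 2 statements merged into one kernel-verified Lean document; each statement's English description precedes it below -/
import Mathlib

section
/- Let η > 0 and g ∈ ℝ² (representing ∇h), and define the 3×3 symmetric matrix M = η·[[I + g·gᵀ, (1/2)η·g], [(1/2)η·gᵀ, (1/3)η²]] in block form with I the 2×2 identity. Then M is positive definite. -/
open Matrix

/-- The SGN coefficient matrix
M = η·[[I + g gᵀ, (η/2) g],[(η/2) gᵀ, η²/3]] (3×3, block form)
is positive definite for η > 0 and any g ∈ ℝ². -/
theorem stmt7 (η : ℝ) (hη : 0 < η) (g : Fin 2 → ℝ)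
    (M : Matrix (Fin 3) (Fin 3) ℝ)
    (hM : M = η • !![1 + g 0 * g 0, g 0 * g 1, (1/2) * η * g 0;
                     g 1 * g 0, 1 + g 1 * g 1, (1/2) * η * g 1;
                     (1/2) * η * g 0, (1/2) * η * g 1, (1/3) * η^2]) :
    M.PosDef := by
  subst hM
  rw [Matrix.posDef_iff_dotProduct_mulVec]
  constructor
  · ext i j
    fin_cases i <;> fin_cases j <;>
      simp [Matrix.conjTranspose_apply, mul_comm]
  · intro x hx
    have hcomp : x 0 ≠ 0 ∨ x 1 ≠ 0 ∨ x 2 ≠ 0 := by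
      by_contra h
      push_neg at h
      apply hx
      funext i
      fin_cases i <;> simp [h.1, h.2.1, h.2.2]
    have hquad : star x ⬝ᵥ ((η • !![1 + g 0 * g 0, g 0 * g 1, (1/2) * η * g 0;
                     g 1 * g 0, 1 + g 1 * g 1, (1/2) * η * g 1;
                     (1/2) * η * g 0, (1/2) * η * g 1, (1/3) * η^2]) *ᵥ x)
        = η * (x 0 ^ 2 + x 1 ^ 2 + (g 0 * x 0 + g 1 * x 1 + η / 2 * x 2) ^ 2
            + η ^ 2 / 12 * x 2 ^ 2) := by
      simp [Matrix.mulVec, dotProduct, Fin.sum_univ_three, Matrix.cons_val_zero,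
        Matrix.cons_val_one, Matrix.head_cons, Fin.isValue]
      ring
    rw [hquad]
    have key : 0 < x 0 ^ 2 + x 1 ^ 2 +
        (g 0 * x 0 + g 1 * x 1 + η / 2 * x 2) ^ 2 + η ^ 2 / 12 * x 2 ^ 2 := by
      rcases hcomp with h | h | h
      · nlinarith [sq_nonneg (x 1), sq_nonneg (g 0 * x 0 + g 1 * x 1 + η / 2 * x 2),
          sq_nonneg (x 2), pow_pos (abs_pos.mpr h) 2, sq_abs (x 0), sq_nonneg η]
      · nlinarith [sq_nonneg (x 0), sq_nonneg (g 0 * x 0 + g 1 * x 1 + η / 2 * x 2),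
          sq_nonneg (x 2), pow_pos (abs_pos.mpr h) 2, sq_abs (x 1), sq_nonneg η]
      · nlinarith [sq_nonneg (x 0), sq_nonneg (x 1),
          sq_nonneg (g 0 * x 0 + g 1 * x 1 + η / 2 * x 2),
          pow_pos (abs_pos.mpr h) 2, sq_abs (x 2), sq_nonneg η, mul_pos hη hη]
    positivity
end

section
/- For the SBDF2 coefficients c(z) = z², b(z) = 2z − 1, every real λ ∈ (0, 1] satisfies: all roots z of c(z) − b(z) + λ·b(z) = 0 satisfy |z| < 1. Equivalently, the roots of z² − (2 − 2λ)z + (1 − λ) = 0 lie strictly inside the unit disk for 0 < λ ≤ 1. -/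
open Complex

/-- Zero-stability of linearly implicit SBDF2: for every real λ ∈ (0,1],
all roots of z² − (2−2λ)z + (1−λ) = 0 lie strictly inside the unit disk. -/
theorem stmt15 (lam : ℝ) (h0 : 0 < lam) (h1 : lam ≤ 1) :
    ∀ z : ℂ, z^2 - (2 - 2 * (lam : ℂ)) * z + (1 - (lam : ℂ)) = 0 →
      ‖z‖ < 1 := by
  intro z hz
  set x := z.re with hx
  set y := z.im with hy
  have hre := congrArg Complex.re hz
  have him := congrArg Complex.im hz
  simp [pow_two, Complex.mul_re, Complex.mul_im, Complex.sub_re, Complex.sub_im,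
    Complex.add_re, Complex.add_im, Complex.ofReal_re, Complex.ofReal_im] at hre him
  rw [← hx, ← hy] at hre him
  have hsq : ‖z‖ ^ 2 = x ^ 2 + y ^ 2 := by
    rw [Complex.sq_norm, Complex.normSq_apply]; ring
  have hlt : x ^ 2 + y ^ 2 < 1 := by
    rcases eq_or_ne y 0 with h | h
    · rw [h] at hre ⊢
      have hl : lam = 1 := by nlinarith [sq_nonneg (x - (1 - lam))]
      rw [hl] at hre
      nlinarith
    · have hxl : x = 1 - lam := by
        have h2 : y * (x - (1 - lam)) = 0 := by nlinarith
        rcases mul_eq_zero.mp h2 with h' | h'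
        · exact absurd h' h
        · linarith
      rw [hxl] at hre ⊢
      nlinarith [sq_nonneg (1 - lam)]
  nlinarith [norm_nonneg z, hsq, hlt]
end
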